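/- arXiv:2102.04370 — 2 statements merged into one kernel-verified Lean document; each statement's English description precedes it below -/
import Mathlib

section
/- For natural numbers d ≥ 1, m ≥ 0, and real α ∈ (0,1], the sum over all k ∈ ℕ_0^d with |k|_1 > m of 2^{-α|k|_1} equals ∑_{ℓ=m+1}^∞ C(ℓ+d-1, d-1) 2^{-αℓ}, and this is bounded above by 2^{-α(m+1)} (1-2^{-α})^{-d} C(m+d, d-1). -/
open Finset

private lemma asc_aux (a b : ℕ) : ∀ r : ℕ,
    r.factorial * (a + b + 1).ascFactorial r ≤ (a + 1).ascFactorial r * (b + 1).ascFactorial r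
  | 0 => by simp
  | (r + 1) => by
    have ih := asc_aux a b r
    rw [Nat.factorial_succ, Nat.ascFactorial_succ, Nat.ascFactorial_succ, Nat.ascFactorial_succ]
    have h1 : (r + 1) * (a + b + 1 + r) ≤ (a + 1 + r) * (b + 1 + r) := by
      have : (r + 1) * (a + b + 1 + r) + a * b = (a + 1 + r) * (b + 1 + r) := by ring
      omega
    calc (r + 1) * r.factorial * ((a + b + 1 + r) * (a + b + 1).ascFactorial r)
        = ((r + 1) * (a + b + 1 + r)) * (r.factorial * (a + b + 1).ascFactorial r) := by ring
      _ ≤ ((a + 1 + r) * (b + 1 + r)) * ((a + 1).ascFactorial r * (b + 1).ascFactorial r) :=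
          Nat.mul_le_mul h1 ih
      _ = (a + 1 + r) * (a + 1).ascFactorial r * ((b + 1 + r) * (b + 1).ascFactorial r) := by ring

private lemma choose_mul_le (a b r : ℕ) :
    (a + b + r).choose r ≤ (a + r).choose r * (b + r).choose r := by
  have h := asc_aux a b r
  rw [Nat.ascFactorial_eq_factorial_mul_choose, Nat.ascFactorial_eq_factorial_mul_choose,
    Nat.ascFactorial_eq_factorial_mul_choose] at h
  have hr := Nat.factorial_pos r
  have h2 : r.factorial * (r.factorial * ((a + b + r).choose r))
      ≤ r.factorial * (r.factorial * ((a + r).choose r * (b + r).choose r)) := by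
    calc r.factorial * (r.factorial * ((a + b + r).choose r))
        ≤ r.factorial * ((a + r).choose r) * (r.factorial * ((b + r).choose r)) := h
      _ = r.factorial * (r.factorial * ((a + r).choose r * (b + r).choose r)) := by ring
  exact Nat.le_of_mul_le_mul_left (Nat.le_of_mul_le_mul_left h2 hr) hr

private lemma card_fiber (d n : ℕ) (hd : 1 ≤ d) :
    Nat.card {k : Fin d → ℕ // ∑ i, k i = n} = (n + d - 1).choose (d - 1) := by
  rw [Nat.card_congr (Sym.equivNatSumOfFintype (Fin d) n).symm, Nat.card_eq_fintype_card,
    Sym.card_sym_eq_choose, Fintype.card_fin]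
  rw [show (n + d - 1) = (d + n - 1) by omega]
  have h1 : n ≤ d + n - 1 := by omega
  rw [← Nat.choose_symm h1]
  congr 1
  omega

theorem stmt1 (d m : ℕ) (hd : 1 ≤ d) (α : ℝ) (hα0 : 0 < α) (hα1 : α ≤ 1) :
    (∑' k : {k : Fin d → ℕ // m < ∑ i, k i},
        (2 : ℝ) ^ (-α * ∑ i, ((k : Fin d → ℕ) i : ℝ)))
      = (∑' s : ℕ, ((m + 1 + s + d - 1).choose (d - 1) : ℝ) *
          (2 : ℝ) ^ (-α * ((m : ℝ) + 1 + (s : ℝ)))) ∧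
    (∑' k : {k : Fin d → ℕ // m < ∑ i, k i},
        (2 : ℝ) ^ (-α * ∑ i, ((k : Fin d → ℕ) i : ℝ)))
      ≤ (2 : ℝ) ^ (-α * ((m : ℝ) + 1)) * ((1 - (2 : ℝ) ^ (-α))⁻¹) ^ d *
          ((m + d).choose (d - 1) : ℝ) := by
  set x : ℝ := (2 : ℝ) ^ (-α) with hxdef
  have hx0 : 0 < x := Real.rpow_pos_of_pos (by norm_num) _
  have hx1 : x < 1 := Real.rpow_lt_one_of_one_lt_of_neg (by norm_num) (by linarith)
  have hxn : ∀ n : ℕ, (2 : ℝ) ^ (-α * (n : ℝ)) = x ^ n := by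
    intro n
    rw [hxdef, ← Real.rpow_natCast ((2 : ℝ) ^ (-α)) n, ← Real.rpow_mul (by norm_num)]
  haveI fin_fiber : ∀ n : ℕ, Finite {k : Fin d → ℕ // ∑ i, k i = n} :=
    fun n => Finite.of_equiv _ (Sym.equivNatSumOfFintype (Fin d) n)
  let e : {k : Fin d → ℕ // m < ∑ i, k i} ≃
      Σ s : ℕ, {k : Fin d → ℕ // ∑ i, k i = m + 1 + s} :=
  { toFun := fun k => ⟨(∑ i, k.1 i) - (m + 1), ⟨k.1, by have := k.2; omega⟩⟩
    invFun := fun p => ⟨p.2.1, by have := p.2.2; omega⟩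
    left_inv := fun k => rfl
    right_inv := fun ⟨s, k, hk⟩ => by
      obtain rfl : s = (∑ i, k i) - (m + 1) := by omega
      rfl }
  set F : (Σ s : ℕ, {k : Fin d → ℕ // ∑ i, k i = m + 1 + s}) → ℝ :=
    fun p => (2 : ℝ) ^ (-α * ∑ i, ((p.2 : Fin d → ℕ) i : ℝ)) with hFdef
  have hFval : ∀ p, F p = x ^ (m + 1 + p.1) := by
    rintro ⟨s, k, hk⟩
    show (2 : ℝ) ^ (-α * ∑ i, (k i : ℝ)) = x ^ (m + 1 + s)
    have hks : ∑ i, (k i : ℝ) = ((m + 1 + s : ℕ) : ℝ) := by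
      rw [← Nat.cast_sum, hk]
    rw [hks, hxn]
  have hg : ∀ s : ℕ, (∑' c : {k : Fin d → ℕ // ∑ i, k i = m + 1 + s}, F ⟨s, c⟩)
      = ((m + 1 + s + d - 1).choose (d - 1) : ℝ) * x ^ (m + 1 + s) := by
    intro s
    have hc : ∀ c : {k : Fin d → ℕ // ∑ i, k i = m + 1 + s}, F ⟨s, c⟩ = x ^ (m + 1 + s) :=
      fun c => hFval ⟨s, c⟩
    rw [tsum_congr hc, tsum_const, card_fiber d (m + 1 + s) hd, nsmul_eq_mul]
  have hnorm : ‖x‖ < 1 := by rwa [Real.norm_eq_abs, abs_of_pos hx0]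
  have hsum_h : Summable (fun s : ℕ => ((s + (d - 1)).choose (d - 1) : ℝ) * x ^ s) :=
    summable_choose_mul_geometric_of_norm_lt_one (d - 1) hnorm
  have hbound : ∀ s : ℕ, ((m + 1 + s + d - 1).choose (d - 1) : ℝ) * x ^ (m + 1 + s)
      ≤ ((m + d).choose (d - 1) : ℝ) * x ^ (m + 1) *
        (((s + (d - 1)).choose (d - 1) : ℝ) * x ^ s) := by
    intro s
    have hc : (m + 1 + s + d - 1).choose (d - 1)
        ≤ (m + d).choose (d - 1) * (s + (d - 1)).choose (d - 1) := by
      have h := choose_mul_le (m + 1) s (d - 1)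
      have e1 : m + 1 + s + (d - 1) = m + 1 + s + d - 1 := by omega
      have e2 : m + 1 + (d - 1) = m + d := by omega
      rwa [e1, e2] at h
    calc ((m + 1 + s + d - 1).choose (d - 1) : ℝ) * x ^ (m + 1 + s)
        ≤ (((m + d).choose (d - 1) * (s + (d - 1)).choose (d - 1) : ℕ) : ℝ) * x ^ (m + 1 + s) :=
          mul_le_mul_of_nonneg_right (by exact_mod_cast hc) (by positivity)
      _ = ((m + d).choose (d - 1) : ℝ) * x ^ (m + 1) *
            (((s + (d - 1)).choose (d - 1) : ℝ) * x ^ s) := by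
          push_cast
          rw [pow_add]
          ring
  have hg_nonneg : ∀ s : ℕ,
      0 ≤ ((m + 1 + s + d - 1).choose (d - 1) : ℝ) * x ^ (m + 1 + s) := fun s => by positivity
  have hsum_g : Summable (fun s : ℕ =>
      ((m + 1 + s + d - 1).choose (d - 1) : ℝ) * x ^ (m + 1 + s)) :=
    Summable.of_nonneg_of_le hg_nonneg hbound (hsum_h.mul_left _)
  have hFnonneg : ∀ p, 0 ≤ F p := fun p => by rw [hFval]; positivity
  have hsumF : Summable F := by
    rw [summable_sigma_of_nonneg hFnonneg]
    exact ⟨fun s => Summable.of_finite, hsum_g.congr fun s => (hg s).symm⟩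
  have heq : (∑' k : {k : Fin d → ℕ // m < ∑ i, k i},
        (2 : ℝ) ^ (-α * ∑ i, ((k : Fin d → ℕ) i : ℝ)))
      = ∑' s : ℕ, ((m + 1 + s + d - 1).choose (d - 1) : ℝ) * x ^ (m + 1 + s) := by
    have h1 : (∑' k : {k : Fin d → ℕ // m < ∑ i, k i},
          (2 : ℝ) ^ (-α * ∑ i, ((k : Fin d → ℕ) i : ℝ)))
        = ∑' p, F p :=
      (Equiv.tsum_eq e.symm
        (fun k : {k : Fin d → ℕ // m < ∑ i, k i} =>
          (2 : ℝ) ^ (-α * ∑ i, ((k : Fin d → ℕ) i : ℝ)))).symm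
    rw [h1, hsumF.tsum_sigma, tsum_congr hg]
  have hterm : ∀ s : ℕ, ((m + 1 + s + d - 1).choose (d - 1) : ℝ) *
      (2 : ℝ) ^ (-α * ((m : ℝ) + 1 + (s : ℝ)))
      = ((m + 1 + s + d - 1).choose (d - 1) : ℝ) * x ^ (m + 1 + s) := by
    intro s
    congr 1
    rw [show (m : ℝ) + 1 + (s : ℝ) = ((m + 1 + s : ℕ) : ℝ) by push_cast; ring, hxn]
  constructor
  · rw [heq, tsum_congr hterm]
  · rw [heq]
    have hle := Summable.tsum_le_tsum hbound hsum_g ((hsum_h.mul_left _))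
    refine hle.trans_eq ?_
    rw [tsum_mul_left, tsum_choose_mul_geometric_of_norm_lt_one (d - 1) hnorm]
    have hd1 : d - 1 + 1 = d := by omega
    rw [hd1]
    rw [show (2 : ℝ) ^ (-α * ((m : ℝ) + 1)) = x ^ (m + 1) by
      rw [show (m : ℝ) + 1 = ((m + 1 : ℕ) : ℝ) by push_cast; ring, hxn]]
    rw [one_div, ← inv_pow]
    ring
end

section
/- Let f : [0,1] → ℝ be continuous with f(0) = f(1) = 0 and suppose |f(x) - f(y)| ≤ |x-y|^α for all x, y ∈ [0,1], where α ∈ (0,1]. For m ∈ ℕ_0, let R_m(f)(x) = ∑_{s=1}^{2^{m+1}-1} f(2^{-m-1}s) φ(2^{m+1}x - s + 1), where φ(t) = max(1 - |t-1|, 0) is the hat function. Then there exists a piecewise-linear function S with values S(2^{-m-1}s) = 2^{-α(m+1)} l_s for integers l_s satisfying l_0 = 0 and |l_s - l_{s-1}| ≤ 1, such that ‖R_m(f) - S‖_∞ ≤ 2^{-α(m+1)-1}. -/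
/-- The hat function `φ(t) = (1 - |t-1|)₊`. -/
noncomputable def hat (t : ℝ) : ℝ := max (1 - |t - 1|) 0

/-- Piecewise-linear interpolant of `f` at the dyadic points `s·2^{-m-1}`,
`R_m(f)(x) = ∑_{s=1}^{2^{m+1}-1} f(2^{-m-1}s) φ(2^{m+1}x - s + 1)`. -/
noncomputable def Rinterp (m : ℕ) (f : ℝ → ℝ) (x : ℝ) : ℝ :=
  ∑ s ∈ (Finset.Icc 1 (2 ^ (m + 1) - 1) : Finset ℕ),
    f ((s : ℝ) / 2 ^ (m + 1)) * hat (2 ^ (m + 1) * x - s + 1)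

noncomputable def clampRound (d : ℝ) : ℤ := max (-1) (min 1 (round d))

lemma clampRound_abs_le (d : ℝ) : |clampRound d| ≤ 1 := by
  unfold clampRound
  rw [abs_le]
  omega

lemma clampRound_close (d : ℝ) (hd : |d| ≤ 3/2) : |d - clampRound d| ≤ 1/2 := by
  have h1 := abs_sub_round d
  rw [abs_le] at h1 hd ⊢
  unfold clampRound
  by_cases h2 : round d ≤ -2
  · have hc : (max (-1) (min 1 (round d)) : ℤ) = -1 := by omega
    rw [hc]
    have : (round d : ℝ) ≤ -2 := by exact_mod_cast h2
    push_cast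
    constructor <;> linarith
  · by_cases h3 : 2 ≤ round d
    · have hc : (max (-1) (min 1 (round d)) : ℤ) = 1 := by omega
      rw [hc]
      have : (2:ℝ) ≤ (round d : ℝ) := by exact_mod_cast h3
      push_cast
      constructor <;> linarith
    · have hc : (max (-1) (min 1 (round d)) : ℤ) = round d := by omega
      rw [hc]
      exact h1

noncomputable def lseq (g : ℕ → ℝ) (h : ℝ) : ℕ → ℤ
  | 0 => 0
  | s + 1 => lseq g h s + clampRound (g (s+1) / h - lseq g h s)

lemma lseq_close (g : ℕ → ℝ) (h : ℝ) (hh : 0 < h) (hg0 : g 0 = 0) (N : ℕ)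
    (hstep : ∀ s, 1 ≤ s → s ≤ N → |g s - g (s-1)| ≤ h) :
    ∀ s ≤ N, |g s - h * lseq g h s| ≤ h / 2 := by
  intro s
  induction s with
  | zero => intro _; simp [lseq, hg0]; positivity
  | succ n ih =>
    intro hn
    have h1 := ih (by omega)
    have h2 := hstep (n+1) (by omega) hn
    simp only [Nat.add_sub_cancel] at h2
    set L := lseq g h n with hL
    set d := g (n+1) / h - (L : ℝ) with hdd
    have hd : |d| ≤ 3/2 := by
      have e : d = (g (n+1) - h * L) / h := by
        rw [hdd, sub_div, mul_div_cancel_left₀ _ hh.ne']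
      rw [e, abs_div, abs_of_pos hh, div_le_iff₀ hh]
      calc |g (n+1) - h * L| ≤ |g (n+1) - g n| + |g n - h * L| := abs_sub_le _ _ _
        _ ≤ 3/2 * h := by linarith
    have hc := clampRound_close d hd
    have e2 : g (n+1) - h * (lseq g h (n+1) : ℝ)
        = h * (d - (clampRound d : ℝ)) := by
      show g (n+1) - h * ((L + clampRound d : ℤ) : ℝ) = _
      push_cast
      rw [hdd, mul_sub, mul_sub, mul_div_assoc', mul_div_cancel_left₀ _ hh.ne']
      ring
    rw [e2, abs_mul, abs_of_pos hh]
    nlinarith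
lemma hat_nonneg (t : ℝ) : 0 ≤ hat t := le_max_right _ _

lemma sum_hat_le_one (t : ℝ) (ht : 0 ≤ t) (a b : ℕ) :
    ∑ s ∈ Finset.Icc a b, hat (t - s + 1) ≤ 1 := by
  set n := ⌊t⌋₊ with hn
  have hn1 : (n:ℝ) ≤ t := Nat.floor_le ht
  have hn2 : t < n + 1 := Nat.lt_floor_add_one t
  have key : ∑ s ∈ Finset.Icc a b, hat (t - s + 1)
      ≤ ∑ s ∈ ({n, n+1} : Finset ℕ), hat (t - s + 1) := by
    rw [← Finset.sum_filter_ne_zero (Finset.Icc a b)]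
    apply Finset.sum_le_sum_of_subset_of_nonneg
    · intro s hs
      simp only [Finset.mem_filter] at hs
      have hne := hs.2
      have harg : t - s + 1 - 1 = t - s := by ring
      have h1 : |t - (s:ℝ)| < 1 := by
        by_contra hcon
        push_neg at hcon
        apply hne
        unfold hat
        rw [harg, max_eq_right (by linarith)]
      rw [abs_lt] at h1
      have hs1 : (s:ℝ) < (n:ℝ) + 2 := by linarith
      have hs2 : ((n:ℝ)) - 1 < (s:ℝ) := by linarith
      have hs1' : s < n + 2 := by exact_mod_cast (by push_cast; linarith : (s:ℝ) < ((n+2:ℕ):ℝ))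
      have hs2' : n ≤ s := by
        by_contra hcon
        push_neg at hcon
        have : (s:ℝ) ≤ (n:ℝ) - 1 := by
          have : s + 1 ≤ n := hcon
          have := (Nat.cast_le (α := ℝ)).2 this
          push_cast at this
          linarith
        linarith
      simp only [Finset.mem_insert, Finset.mem_singleton]
      omega
    · intro s _ _; exact hat_nonneg _
  refine key.trans ?_
  rw [Finset.sum_pair (by omega : n ≠ n+1)]
  set u := t - n with hu
  have hu0 : 0 ≤ u := by simp [hu]; linarith
  have hu1 : u < 1 := by simp [hu]; linarith
  have e1 : hat (t - n + 1) = 1 - u := by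
    unfold hat
    have : t - (n:ℝ) + 1 - 1 = u := by ring
    rw [this, abs_of_nonneg hu0, max_eq_left (by linarith)]
  have e2 : hat (t - (n+1:ℕ) + 1) = u := by
    unfold hat
    have : t - ((n+1:ℕ):ℝ) + 1 - 1 = u - 1 := by push_cast; ring
    rw [this, abs_of_nonpos (by linarith), max_eq_left (by linarith)]
    ring
  rw [e1, e2]
  linarith

theorem stmt4 (α : ℝ) (hα0 : 0 < α) (hα1 : α ≤ 1) (m : ℕ) (f : ℝ → ℝ)
    (hf : ContinuousOn f (Set.Icc 0 1)) (hf0 : f 0 = 0) (hf1 : f 1 = 0)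
    (hH : ∀ x ∈ Set.Icc (0 : ℝ) 1, ∀ y ∈ Set.Icc (0 : ℝ) 1, |f x - f y| ≤ |x - y| ^ α) :
    ∃ l : ℕ → ℤ, l 0 = 0 ∧ (∀ s, 1 ≤ s → s ≤ 2 ^ (m + 1) → |l s - l (s - 1)| ≤ 1) ∧
      ∀ x ∈ Set.Icc (0 : ℝ) 1,
        |Rinterp m f x - ∑ s ∈ (Finset.Icc 1 (2 ^ (m + 1) - 1) : Finset ℕ),
            (2 : ℝ) ^ (-α * ((m : ℝ) + 1)) * (l s : ℝ) * hat (2 ^ (m + 1) * x - s + 1)|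
          ≤ (2 : ℝ) ^ (-α * ((m : ℝ) + 1) - 1) := by
  set N : ℕ := 2 ^ (m + 1) with hN
  set h : ℝ := (2:ℝ) ^ (-α * ((m : ℝ) + 1)) with hh_def
  have hh : 0 < h := Real.rpow_pos_of_pos (by norm_num) _
  set g : ℕ → ℝ := fun s => f ((s : ℝ) / 2 ^ (m + 1)) with hg
  have hg0 : g 0 = 0 := by simp [hg, hf0]
  have hpow : (0:ℝ) < 2 ^ (m+1) := by positivity
  have hNcast : ((N:ℕ):ℝ) = 2 ^ (m+1) := by rw [hN]; push_cast; ring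
  have hstep : ∀ s, 1 ≤ s → s ≤ N → |g s - g (s-1)| ≤ h := by
    intro s hs1 hs2
    have hsc : ((s:ℕ):ℝ) ≤ 2 ^ (m+1) := by
      rw [← hNcast]; exact_mod_cast hs2
    have hsc1 : (1:ℝ) ≤ (s:ℝ) := by exact_mod_cast hs1
    have hx : (s:ℝ) / 2 ^ (m+1) ∈ Set.Icc (0:ℝ) 1 := by
      constructor
      · positivity
      · rw [div_le_one hpow]; exact hsc
    have hy : (((s-1:ℕ)):ℝ) / 2 ^ (m+1) ∈ Set.Icc (0:ℝ) 1 := by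
      have : (((s-1:ℕ)):ℝ) = (s:ℝ) - 1 := by
        push_cast [Nat.cast_sub hs1]; ring
      rw [this]
      constructor
      · apply div_nonneg (by linarith) (le_of_lt hpow)
      · rw [div_le_one hpow]; linarith
    have hb := hH _ hx _ hy
    have hdist : |(s:ℝ) / 2 ^ (m+1) - (((s-1:ℕ)):ℝ) / 2 ^ (m+1)| = (2 ^ (m+1) : ℝ)⁻¹ := by
      have : (((s-1:ℕ)):ℝ) = (s:ℝ) - 1 := by
        push_cast [Nat.cast_sub hs1]; ring
      rw [this]
      rw [div_sub_div_same]
      have e : (s:ℝ) - ((s:ℝ) - 1) = 1 := by ring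
      rw [e, abs_of_pos (by positivity), one_div]
    have hpowe : ((2:ℝ) ^ (m+1) : ℝ)⁻¹ ^ α = h := by
      rw [hh_def]
      rw [← Real.rpow_natCast 2 (m+1), ← Real.rpow_neg (by norm_num),
        ← Real.rpow_mul (by norm_num : (0:ℝ) ≤ 2)]
      congr 1
      push_cast
      ring
    rw [hdist, hpowe] at hb
    simpa [hg] using hb
  refine ⟨lseq g h, rfl, ?_, ?_⟩
  · intro s hs1 _
    obtain ⟨n, rfl⟩ : ∃ n, s = n + 1 := ⟨s - 1, by omega⟩
    simp only [Nat.add_sub_cancel]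
    have : lseq g h (n+1) - lseq g h n = clampRound (g (n+1) / h - lseq g h n) := by
      simp [lseq]
    rw [this]
    exact clampRound_abs_le _
  · intro x hx
    have hinv := lseq_close g h hh hg0 N hstep
    have ht : 0 ≤ (2:ℝ) ^ (m+1) * x := by
      have := hx.1; positivity
    have e : Rinterp m f x - ∑ s ∈ (Finset.Icc 1 (2 ^ (m + 1) - 1) : Finset ℕ),
            (2 : ℝ) ^ (-α * ((m : ℝ) + 1)) * (lseq g h s : ℝ) * hat (2 ^ (m + 1) * x - s + 1)
        = ∑ s ∈ (Finset.Icc 1 (2 ^ (m + 1) - 1) : Finset ℕ),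
            (g s - h * (lseq g h s : ℝ)) * hat (2 ^ (m + 1) * x - s + 1) := by
      rw [Rinterp, ← Finset.sum_sub_distrib]
      apply Finset.sum_congr rfl
      intro s _
      rw [hg, hh_def]
      ring
    rw [e]
    calc |∑ s ∈ (Finset.Icc 1 (2 ^ (m + 1) - 1) : Finset ℕ),
            (g s - h * (lseq g h s : ℝ)) * hat (2 ^ (m + 1) * x - s + 1)|
        ≤ ∑ s ∈ (Finset.Icc 1 (2 ^ (m + 1) - 1) : Finset ℕ),
            |(g s - h * (lseq g h s : ℝ)) * hat (2 ^ (m + 1) * x - s + 1)| :=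
          Finset.abs_sum_le_sum_abs _ _
      _ ≤ ∑ s ∈ (Finset.Icc 1 (2 ^ (m + 1) - 1) : Finset ℕ),
            (h/2) * hat (2 ^ (m + 1) * x - s + 1) := by
          apply Finset.sum_le_sum
          intro s hs
          rw [abs_mul, abs_of_nonneg (hat_nonneg _)]
          apply mul_le_mul_of_nonneg_right _ (hat_nonneg _)
          apply hinv
          simp only [Finset.mem_Icc] at hs
          omega
      _ = (h/2) * ∑ s ∈ (Finset.Icc 1 (2 ^ (m + 1) - 1) : Finset ℕ),
            hat (2 ^ (m + 1) * x - s + 1) := by rw [Finset.mul_sum]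
      _ ≤ (h/2) * 1 := by
          apply mul_le_mul_of_nonneg_left (sum_hat_le_one _ ht _ _) (by positivity)
      _ = (2 : ℝ) ^ (-α * ((m : ℝ) + 1) - 1) := by
          rw [Real.rpow_sub (by norm_num), Real.rpow_one, hh_def]
          ring
end
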